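/- arXiv:2111.09654 — 4 statements merged into one kernel-verified Lean document; each statement's English description precedes it below -/
import Mathlib

section
/- Let d ≥ 1 and let μ, ν be permutations of Ī_d. With X = Ī_d × {h,v} and ι, σ the permutations of X defined by ι(κ,h) = (κ,v), ι(κ,v) = (−κ,h), σ(κ,h) = (μ(κ),h), σ(κ,v) = (ν(κ),v), the subgroup of Sym(X) generated by ι and σ acts transitively on X if and only if the subgroup of Sym(Ī_d) generated by μ, ν and the sign-inversion map κ ↦ −κ acts transitively on Ī_d. -/
abbrev IBar (d : ℕ) : Type := {κ : ℤ // κ ≠ 0 ∧ |κ| ≤ (d : ℤ)}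

instance IBar.finite (d : ℕ) : Finite (IBar d) := by
  have h : ({κ : ℤ | κ ≠ 0 ∧ |κ| ≤ (d : ℤ)}).Finite :=
    Set.Finite.subset (Set.finite_Icc (-(d : ℤ)) (d : ℤ))
      (fun κ hκ => Set.mem_Icc.mpr (abs_le.mp hκ.2))
  exact h.to_subtype

/-- Negation (sign inversion) on `IBar d`. -/
def negI {d : ℕ} (κ : IBar d) : IBar d :=
  ⟨-κ.1, ⟨neg_ne_zero.mpr κ.2.1, by rw [abs_neg]; exact κ.2.2⟩⟩

lemma negI_invol {d : ℕ} : Function.Involutive (negI (d := d)) :=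
  fun κ => Subtype.ext (neg_neg _)

/-- Sign inversion as a permutation of `IBar d`. -/
def negP (d : ℕ) : Equiv.Perm (IBar d) := ⟨negI, negI, negI_invol, negI_invol⟩

/-- `X d` : two copies of `IBar d`; `true` = horizontal, `false` = vertical. -/
abbrev XBar (d : ℕ) : Type := IBar d × Bool

/-- The permutation ι : (κ,h) ↦ (κ,v), (κ,v) ↦ (−κ,h). -/
def iotaP (d : ℕ) : Equiv.Perm (XBar d) where
  toFun p := if p.2 then (p.1, false) else (negI p.1, true)
  invFun p := if p.2 then (negI p.1, false) else (p.1, true)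
  left_inv := by rintro ⟨κ, b⟩; cases b <;> simp [negI_invol κ]
  right_inv := by rintro ⟨κ, b⟩; cases b <;> simp [negI_invol κ]

/-- The permutation σ : (κ,h) ↦ (μ(κ),h), (κ,v) ↦ (ν(κ),v). -/
def sigmaP {d : ℕ} (μ ν : Equiv.Perm (IBar d)) : Equiv.Perm (XBar d) where
  toFun p := if p.2 then (μ p.1, true) else (ν p.1, false)
  invFun p := if p.2 then (μ.symm p.1, true) else (ν.symm p.1, false)
  left_inv := by rintro ⟨κ, b⟩; cases b <;> simp
  right_inv := by rintro ⟨κ, b⟩; cases b <;> simp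

/-- The index in `{0,…,d−1}` corresponding to `|κ| ∈ {1,…,d}`. -/
def idx {d : ℕ} (κ : IBar d) : Fin d :=
  ⟨κ.1.natAbs - 1, by
    have h1 : κ.1 ≠ 0 := κ.2.1
    have h2 : (κ.1.natAbs : ℤ) ≤ (d : ℤ) := by
      rw [← Int.abs_eq_natAbs]; exact κ.2.2
    omega⟩

theorem Equiv.Perm.apply_inv_self {α : Type*} (f : Equiv.Perm α) (x : α) : f (f⁻¹ x) = x :=
  f.apply_symm_apply x

theorem Equiv.Perm.inv_apply_self {α : Type*} (f : Equiv.Perm α) (x : α) : f⁻¹ (f x) = x :=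
  f.symm_apply_apply x

/-- ⟨ι,σ⟩ acts transitively on X = Ī_d × {h,v} iff ⟨μ,ν, sign-inversion⟩
acts transitively on Ī_d. -/
theorem stmt2 (d : ℕ) (hd : 1 ≤ d) (μ ν : Equiv.Perm (IBar d)) :
    (∀ ζ η : XBar d, ∃ g ∈ Subgroup.closure {iotaP d, sigmaP μ ν}, g ζ = η) ↔
    (∀ κ lam : IBar d, ∃ g ∈ Subgroup.closure {μ, ν, negP d}, g κ = lam) := by
  constructor
  · intro hX κ lam
    have key : ∀ g ∈ Subgroup.closure {iotaP d, sigmaP μ ν},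
        ∀ ζ : XBar d, ∃ h ∈ Subgroup.closure {μ, ν, negP d}, h ζ.1 = (g ζ).1 := by
      intro g hg
      induction hg using Subgroup.closure_induction with
      | mem x hx =>
        rcases hx with rfl | rfl
        · rintro ⟨κ, b⟩
          cases b
          · exact ⟨negP d, Subgroup.subset_closure (by simp), by simp [iotaP, negP]; rfl⟩
          · exact ⟨1, one_mem _, by simp [iotaP]⟩
        · rintro ⟨κ, b⟩
          cases b
          · exact ⟨ν, Subgroup.subset_closure (by simp), by simp [sigmaP]⟩
          · exact ⟨μ, Subgroup.subset_closure (by simp), by simp [sigmaP]⟩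
      | one => exact fun ζ => ⟨1, one_mem _, by simp⟩
      | mul a b _ _ pa pb =>
        intro ζ
        obtain ⟨hb, hbmem, hbeq⟩ := pb ζ
        obtain ⟨ha, hamem, haeq⟩ := pa (b ζ)
        exact ⟨ha * hb, mul_mem hamem hbmem,
          by simp only [Equiv.Perm.mul_apply, hbeq, haeq]⟩
      | inv a _ pa =>
        intro ζ
        obtain ⟨h, hmem, heq⟩ := pa (a⁻¹ ζ)
        refine ⟨h⁻¹, inv_mem hmem, ?_⟩
        rw [Equiv.Perm.apply_inv_self] at heq
        rw [← heq, Equiv.Perm.inv_apply_self]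
    obtain ⟨g, hg, hgeq⟩ := hX (κ, true) (lam, true)
    obtain ⟨h, hmem, heq⟩ := key g hg (κ, true)
    exact ⟨h, hmem, by simpa [hgeq] using heq⟩
  · intro hI ζ η
    have lift : ∀ h ∈ Subgroup.closure {μ, ν, negP d},
        ∃ g ∈ Subgroup.closure {iotaP d, sigmaP μ ν},
          ∀ κ : IBar d, g (κ, true) = (h κ, true) := by
      intro h hh
      induction hh using Subgroup.closure_induction with
      | mem x hx =>
        have hι : iotaP d ∈ Subgroup.closure {iotaP d, sigmaP μ ν} :=
          Subgroup.subset_closure (by simp)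
        have hσ : sigmaP μ ν ∈ Subgroup.closure {iotaP d, sigmaP μ ν} :=
          Subgroup.subset_closure (by simp)
        rcases hx with hx | hx | hx
        · exact ⟨sigmaP μ ν, hσ, fun κ => by rw [hx]; rfl⟩
        · exact ⟨(iotaP d)⁻¹ * sigmaP μ ν * iotaP d,
            mul_mem (mul_mem (inv_mem hι) hσ) hι,
            fun κ => by rw [hx]; rfl⟩
        · exact ⟨iotaP d * iotaP d, mul_mem hι hι,
            fun κ => by rw [hx]; rfl⟩
      | one => exact ⟨1, one_mem _, fun κ => by simp⟩
      | mul a b _ _ pa pb =>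
        obtain ⟨ga, hga, ha⟩ := pa
        obtain ⟨gb, hgb, hb⟩ := pb
        exact ⟨ga * gb, mul_mem hga hgb,
          fun κ => by simp only [Equiv.Perm.mul_apply, hb, ha]⟩
      | inv a _ pa =>
        obtain ⟨ga, hga, ha⟩ := pa
        refine ⟨ga⁻¹, inv_mem hga, fun κ => ?_⟩
        have h1 := ha (a⁻¹ κ)
        rw [Equiv.Perm.apply_inv_self] at h1
        rw [← h1, Equiv.Perm.inv_apply_self]
    have hor : ∀ κ lam : IBar d, ∃ g ∈ Subgroup.closure {iotaP d, sigmaP μ ν},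
        g (κ, true) = (lam, true) := by
      intro κ lam
      obtain ⟨h, hmem, heq⟩ := hI κ lam
      obtain ⟨g, hg, hgeq⟩ := lift h hmem
      exact ⟨g, hg, by rw [hgeq, heq]⟩
    have hι : iotaP d ∈ Subgroup.closure {iotaP d, sigmaP μ ν} :=
      Subgroup.subset_closure (by simp)
    obtain ⟨κ, b⟩ := ζ
    obtain ⟨lam, b'⟩ := η
    have hback : (iotaP d)⁻¹ (κ, false) = (κ, true) := rfl
    have hfwd : ∀ x : IBar d, iotaP d (x, true) = (x, false) := fun x => rfl
    cases b <;> cases b'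
    · obtain ⟨g, hg, hgeq⟩ := hor κ lam
      exact ⟨iotaP d * g * (iotaP d)⁻¹, mul_mem (mul_mem hι hg) (inv_mem hι),
        by simp only [Equiv.Perm.mul_apply, hback, hgeq, hfwd]⟩
    · obtain ⟨g, hg, hgeq⟩ := hor κ lam
      exact ⟨g * (iotaP d)⁻¹, mul_mem hg (inv_mem hι),
        by simp only [Equiv.Perm.mul_apply, hback, hgeq]⟩
    · obtain ⟨g, hg, hgeq⟩ := hor κ lam
      exact ⟨iotaP d * g, mul_mem hι hg,
        by simp only [Equiv.Perm.mul_apply, hgeq, hfwd]⟩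
    · exact hor κ lam
end

section
/- Let X be a finite nonempty set and let μ, ν be fixed-point-free involutions of X such that the subgroup ⟨μ,ν⟩ of Sym(X) acts transitively on X. Then the cardinality of X is even, the permutation μ∘ν has order |X|/2, the cyclic subgroup generated by μ∘ν has exactly two orbits on X, each of cardinality |X|/2, and μ interchanges these two orbits. -/
/-- `O` is an orbit of the cyclic group generated by the permutation `f`. -/
def IsCycOrbit {X : Type*} (f : Equiv.Perm X) (O : Set X) : Prop :=
  ∃ x : X, O = {y : X | ∃ n : ℤ, (f ^ n) x = y}

/-- if μ, ν are fixed-point-free involutions of a finite nonempty set X with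
⟨μ,ν⟩ transitive, then |X| is even, μ∘ν has order |X|/2, ⟨μ∘ν⟩ has exactly two orbits,
each of cardinality |X|/2, and μ interchanges the two orbits. -/
theorem stmt4 {X : Type*} [Finite X] [Nonempty X] (μ ν : Equiv.Perm X)
    (hμ2 : μ * μ = 1) (hν2 : ν * ν = 1)
    (hμf : ∀ x : X, μ x ≠ x) (hνf : ∀ x : X, ν x ≠ x)
    (htrans : ∀ x y : X, ∃ g ∈ Subgroup.closure {μ, ν}, g x = y) :
    Even (Nat.card X) ∧
    orderOf (μ * ν) = Nat.card X / 2 ∧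
    ∃ O₁ O₂ : Set X,
      IsCycOrbit (μ * ν) O₁ ∧ IsCycOrbit (μ * ν) O₂ ∧ O₁ ≠ O₂ ∧
      (∀ O : Set X, IsCycOrbit (μ * ν) O → O = O₁ ∨ O = O₂) ∧
      Nat.card O₁ = Nat.card X / 2 ∧ Nat.card O₂ = Nat.card X / 2 ∧
      (∀ x ∈ O₁, μ x ∈ O₂) ∧ (∀ x ∈ O₂, μ x ∈ O₁) := by
  set f := μ * ν with hf
  have hμinv : μ⁻¹ = μ := by
    rw [← mul_one μ⁻¹, ← hμ2, ← mul_assoc, inv_mul_cancel, one_mul]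
  have hνinv : ν⁻¹ = ν := by
    rw [← mul_one ν⁻¹, ← hν2, ← mul_assoc, inv_mul_cancel, one_mul]
  have hfinv : f⁻¹ = ν * μ := by
    rw [hf, mul_inv_rev, hμinv, hνinv]
  have h1 : μ * f * μ⁻¹ = f⁻¹ := by
    rw [hf, hfinv, hμinv, ← mul_assoc, hμ2, one_mul]
  have h1ν : ν * f * ν⁻¹ = f⁻¹ := by
    rw [hf, hfinv, hνinv, mul_assoc ν (μ * ν) ν, mul_assoc μ ν ν, hν2, mul_one]
  have keyμ : ∀ n : ℤ, μ * f ^ n * μ⁻¹ = f ^ (-n) := by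
    intro n
    have h2 := map_zpow (MulAut.conj μ) f n
    simp only [MulAut.conj_apply] at h2
    rw [h2, h1, inv_zpow, zpow_neg]
  have keyν : ∀ n : ℤ, ν * f ^ n * ν⁻¹ = f ^ (-n) := by
    intro n
    have h2 := map_zpow (MulAut.conj ν) f n
    simp only [MulAut.conj_apply] at h2
    rw [h2, h1ν, inv_zpow, zpow_neg]
  have hcμ : ∀ n : ℤ, μ * f ^ n = f ^ (-n) * μ := by
    intro n
    rw [← keyμ n, mul_assoc, inv_mul_cancel, mul_one]
  have hcν : ∀ n : ℤ, ν * f ^ n = f ^ (-n) * ν := by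
    intro n
    rw [← keyν n, mul_assoc, inv_mul_cancel, mul_one]
  have happ : ∀ (a b : ℤ) (x : X), (f ^ a) ((f ^ b) x) = (f ^ (a + b)) x := by
    intro a b x
    rw [← Equiv.Perm.mul_apply, ← zpow_add]
  have hμapp : ∀ (n : ℤ) (x : X), μ ((f ^ n) x) = (f ^ (-n)) (μ x) := by
    intro n x
    rw [← Equiv.Perm.mul_apply, hcμ n, Equiv.Perm.mul_apply]
  have hνapp : ∀ (n : ℤ) (x : X), ν ((f ^ n) x) = (f ^ (-n)) (ν x) := by
    intro n x
    rw [← Equiv.Perm.mul_apply, hcν n, Equiv.Perm.mul_apply]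
  have hνx : ∀ x : X, ν x = μ (f x) := by
    intro x
    have : μ * f = ν := by rw [hf, ← mul_assoc, hμ2, one_mul]
    rw [← this, Equiv.Perm.mul_apply]
  -- key: no power of f maps x to μ x
  have hA : ∀ (x : X) (k : ℤ), (f ^ k) x ≠ μ x := by
    intro x k h
    rcases Int.even_or_odd k with ⟨n, hn⟩ | ⟨n, hn⟩
    · have : μ ((f ^ n) x) = (f ^ n) x := by
        rw [hμapp, ← h, happ, show -n + k = n by omega]
      exact hμf _ this
    · have h2 : ν x = (f ^ (k - 1)) x := by
        have h3 : f x = (f ^ (1 : ℤ)) x := by rw [zpow_one]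
        rw [hνx x, h3, hμapp, ← h, happ, show (-1 : ℤ) + k = k - 1 by ring]
      have : ν ((f ^ n) x) = (f ^ n) x := by
        rw [hνapp, h2, happ, show -n + (k - 1) = n by omega]
      exact hνf _ this
  -- classification of elements of the closure
  have hclass : ∀ g ∈ Subgroup.closure {μ, ν}, ∃ n : ℤ, g = f ^ n ∨ g = f ^ n * μ := by
    intro g hg
    induction hg using Subgroup.closure_induction with
    | mem x hx =>
      rcases hx with rfl | rfl
      · exact ⟨0, Or.inr (by rw [zpow_zero, one_mul])⟩
      · refine ⟨-1, Or.inr ?_⟩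
        rw [zpow_neg_one, hfinv, mul_assoc, hμ2, mul_one]
    | one => exact ⟨0, Or.inl (zpow_zero f).symm⟩
    | mul a b ha hb iha ihb =>
      obtain ⟨n, hn⟩ := iha
      obtain ⟨m, hm⟩ := ihb
      rcases hn with rfl | rfl <;> rcases hm with rfl | rfl
      · exact ⟨n + m, Or.inl (zpow_add f n m).symm⟩
      · exact ⟨n + m, Or.inr (by rw [← mul_assoc, ← zpow_add])⟩
      · exact ⟨n - m, Or.inr (by
          rw [mul_assoc, hcμ m, ← mul_assoc, ← zpow_add, ← sub_eq_add_neg])⟩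
      · exact ⟨n - m, Or.inl (by
          rw [mul_assoc, ← mul_assoc μ, hcμ m, mul_assoc, hμ2, mul_one, ← zpow_add,
            ← sub_eq_add_neg])⟩
    | inv a ha iha =>
      obtain ⟨n, hn⟩ := iha
      rcases hn with rfl | rfl
      · exact ⟨-n, Or.inl (by rw [zpow_neg])⟩
      · refine ⟨n, Or.inr ?_⟩
        rw [mul_inv_rev, hμinv, ← zpow_neg, hcμ, neg_neg]
  obtain ⟨x₀⟩ := ‹Nonempty X›
  set O₁ : Set X := {y | ∃ n : ℤ, (f ^ n) x₀ = y} with hO₁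
  set O₂ : Set X := {y | ∃ n : ℤ, (f ^ n) (μ x₀) = y} with hO₂
  have hcover : ∀ x : X, (∃ n : ℤ, (f ^ n) x₀ = x) ∨ (∃ n : ℤ, (f ^ n) (μ x₀) = x) := by
    intro x
    obtain ⟨g, hg, hgx⟩ := htrans x₀ x
    obtain ⟨n, hn | hn⟩ := hclass g hg
    · exact Or.inl ⟨n, by rw [← hn]; exact hgx⟩
    · refine Or.inr ⟨n, ?_⟩
      rw [← hgx, hn, Equiv.Perm.mul_apply]
  have hdisj : ∀ y : X, y ∈ O₁ → y ∈ O₂ → False := by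
    rintro y ⟨n, hn⟩ ⟨m, hm⟩
    apply hA x₀ (n - m)
    have h2 : (f ^ (-m : ℤ)) ((f ^ n) x₀) = (f ^ (-m : ℤ)) ((f ^ m) (μ x₀)) := by
      rw [hn, hm]
    rw [happ, happ, show -m + m = 0 by ring, zpow_zero, Equiv.Perm.one_apply] at h2
    rw [show n - m = -m + n by ring]
    exact h2
  have hmemO₁ : x₀ ∈ O₁ := ⟨0, by rw [zpow_zero, Equiv.Perm.one_apply]⟩
  have hne : O₁ ≠ O₂ := by
    intro h
    exact hdisj x₀ hmemO₁ (h ▸ hmemO₁)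
  have horb : ∀ x y : X, (∃ n : ℤ, (f ^ n) x = y) →
      {z : X | ∃ n : ℤ, (f ^ n) x = z} = {z : X | ∃ n : ℤ, (f ^ n) y = z} := by
    rintro x y ⟨k, hk⟩
    ext z
    constructor
    · rintro ⟨n, rfl⟩
      exact ⟨n - k, by rw [← hk, happ, show n - k + k = n by ring]⟩
    · rintro ⟨n, rfl⟩
      exact ⟨n + k, by rw [← hk, happ]⟩
  have huniq : ∀ O : Set X, IsCycOrbit f O → O = O₁ ∨ O = O₂ := by
    rintro O ⟨x, rfl⟩
    rcases hcover x with ⟨n, hn⟩ | ⟨n, hn⟩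
    · left; rw [hO₁]; exact (horb x₀ x ⟨n, hn⟩).symm
    · right; rw [hO₂]; exact (horb (μ x₀) x ⟨n, hn⟩).symm
  have hO₂img : O₂ = μ '' O₁ := by
    ext y
    constructor
    · rintro ⟨n, rfl⟩
      exact ⟨(f ^ (-n : ℤ)) x₀, ⟨-n, rfl⟩, by rw [hμapp, neg_neg]⟩
    · rintro ⟨z, ⟨n, rfl⟩, rfl⟩
      exact ⟨-n, (hμapp n x₀).symm⟩
  have hcard12 : Nat.card O₂ = Nat.card O₁ := by
    rw [Nat.card_coe_set_eq, Nat.card_coe_set_eq, hO₂img,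
      Set.ncard_image_of_injective _ μ.injective]
  have huniv : O₁ ∪ O₂ = Set.univ := by
    ext x
    simp only [Set.mem_univ, iff_true, Set.mem_union]
    exact hcover x
  have hdisj' : Disjoint O₁ O₂ := Set.disjoint_left.mpr fun {y} h1 h2 => hdisj y h1 h2
  have hcardX : Nat.card X = 2 * Nat.card O₁ := by
    have h2 := Set.ncard_union_eq hdisj' (Set.toFinite _) (Set.toFinite _)
    rw [huniv, Set.ncard_univ] at h2
    rw [h2, ← Nat.card_coe_set_eq, ← Nat.card_coe_set_eq, hcard12]
    ring
  have heven : Even (Nat.card X) := ⟨Nat.card O₁, by rw [hcardX]; ring⟩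
  have hhalf : Nat.card X / 2 = Nat.card O₁ := by omega
  have hstab : ∀ n : ℤ, (f ^ n) x₀ = x₀ → f ^ n = 1 := by
    intro n h
    have h' : (f ^ (-n : ℤ)) x₀ = x₀ := by
      have h2 := congrArg (f ^ (-n : ℤ)) h
      rw [happ, show -n + n = 0 by ring, zpow_zero, Equiv.Perm.one_apply] at h2
      exact h2.symm
    have e1 : ∀ (j : ℤ) (x : X), (f ^ j) (μ x) = μ ((f ^ (-j)) x) := by
      intro j x; rw [hμapp, neg_neg]
    ext x
    rcases hcover x with ⟨k, rfl⟩ | ⟨k, rfl⟩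
    · rw [Equiv.Perm.one_apply, happ, show n + k = k + n by ring, ← happ, h]
    · rw [Equiv.Perm.one_apply, happ, e1 (n + k), e1 k]
      congr 1
      rw [show -(n + k) = -k + -n by ring, ← happ, h']
  have horder : orderOf f = Nat.card O₁ := by
    have hmem : ∀ g : Subgroup.zpowers f, (g : Equiv.Perm X) x₀ ∈ O₁ := by
      intro g
      obtain ⟨n, hn⟩ := Subgroup.mem_zpowers_iff.mp g.2
      exact ⟨n, by rw [hn]⟩
    have hbij : Function.Bijective
        (fun g : Subgroup.zpowers f => (⟨(g : Equiv.Perm X) x₀, hmem g⟩ : O₁)) := by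
      constructor
      · intro a b hab
        obtain ⟨n, hn⟩ := Subgroup.mem_zpowers_iff.mp a.2
        obtain ⟨m, hm⟩ := Subgroup.mem_zpowers_iff.mp b.2
        have h1' : (f ^ n) x₀ = (f ^ m) x₀ := by
          rw [hn, hm]; exact congrArg Subtype.val hab
        have h2 : (f ^ (n - m)) x₀ = x₀ := by
          have h3 := congrArg (f ^ (-m : ℤ)) h1'
          rw [happ, happ, show -m + m = 0 by ring, zpow_zero, Equiv.Perm.one_apply] at h3
          rw [show n - m = -m + n by ring]
          exact h3
        have h3 := hstab _ h2
        have h4 : f ^ n = f ^ m := by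
          have h5 : f ^ (n - m) * f ^ m = f ^ m := by rw [h3, one_mul]
          rwa [← zpow_add, sub_add_cancel] at h5
        apply Subtype.ext
        rw [← hn, ← hm, h4]
      · rintro ⟨y, n, hn⟩
        exact ⟨⟨f ^ n, Subgroup.mem_zpowers_iff.mpr ⟨n, rfl⟩⟩, Subtype.ext hn⟩
    rw [← Nat.card_zpowers f]
    exact Nat.card_eq_of_bijective _ hbij
  have hmap1 : ∀ x ∈ O₁, μ x ∈ O₂ := by
    rintro x ⟨n, rfl⟩
    exact ⟨-n, (hμapp n x₀).symm⟩
  have hmap2 : ∀ x ∈ O₂, μ x ∈ O₁ := by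
    rintro x ⟨n, rfl⟩
    refine ⟨-n, ?_⟩
    rw [hμapp, show μ (μ x₀) = x₀ from by
      rw [← Equiv.Perm.mul_apply, hμ2, Equiv.Perm.one_apply]]
  exact ⟨heven, by rw [hhalf]; exact horder, O₁, O₂, ⟨x₀, hO₁⟩, ⟨μ x₀, hO₂⟩, hne, huniq,
    hhalf.symm, hcard12.trans hhalf.symm, hmap1, hmap2⟩
end

section
/- Let X be a finite nonempty set and let μ, ν be fixed-point-free involutions of X such that the subgroup ⟨μ,ν⟩ of Sym(X) acts transitively on X. Then the centralizer in Sym(X) of the subgroup ⟨μ,ν⟩ (equivalently, the set of permutations of X commuting with both μ and ν) has cardinality equal to the cardinality of X. -/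
/-- if μ, ν are fixed-point-free involutions of a finite nonempty set X with
⟨μ,ν⟩ transitive, then the centralizer of {μ,ν} in Sym(X) has cardinality |X|. -/
theorem stmt5 {X : Type*} [Finite X] [Nonempty X] (μ ν : Equiv.Perm X)
    (hμ2 : μ * μ = 1) (hν2 : ν * ν = 1)
    (hμf : ∀ x : X, μ x ≠ x) (hνf : ∀ x : X, ν x ≠ x)
    (htrans : ∀ x y : X, ∃ g ∈ Subgroup.closure {μ, ν}, g x = y) :
    Nat.card (Subgroup.centralizer {μ, ν} : Subgroup (Equiv.Perm X)) = Nat.card X := by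
  classical
  obtain ⟨x₀⟩ := ‹Nonempty X›
  have hμi : μ⁻¹ = μ := inv_eq_of_mul_eq_one_right hμ2
  have hνi : ν⁻¹ = ν := inv_eq_of_mul_eq_one_right hν2
  set G := Subgroup.closure ({μ, ν} : Set (Equiv.Perm X)) with hG
  set σ : Equiv.Perm X := μ * ν with hσdef
  have hconj1 : μ * σ * μ⁻¹ = σ⁻¹ := by
    rw [hσdef, hμi, mul_inv_rev, hμi, hνi]
    calc μ * (μ * ν) * μ = (μ * μ) * (ν * μ) := by group
    _ = ν * μ := by rw [hμ2, one_mul]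
  -- key commutation relation
  have hconj : ∀ k : ℤ, μ * σ ^ k = σ ^ (-k) * μ := by
    intro k
    have h2 : μ * σ ^ k * μ⁻¹ = (μ * σ * μ⁻¹) ^ k := by
      have := map_zpow (MulAut.conj μ) σ k
      simpa [MulAut.conj_apply, mul_assoc] using this
    have h3 : μ * σ ^ k * μ⁻¹ = σ ^ (-k) := by rw [h2, hconj1, inv_zpow']
    rw [← h3]; group
  have hrel : ∀ k : ℤ, σ ^ k * μ = μ * σ ^ (-k) := by
    intro k
    rw [hconj (-k), neg_neg]
  have hνeq : ν = σ⁻¹ * μ := by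
    rw [hσdef, mul_inv_rev, hνi, hμi, mul_assoc, hμ2, mul_one]
  -- decomposition of elements of G
  have hdec : ∀ g ∈ G, (∃ k : ℤ, g = σ ^ k) ∨ (∃ k : ℤ, g = σ ^ k * μ) := by
    intro g hg
    induction hg using Subgroup.closure_induction with
    | mem p hp =>
      rcases hp with hp | hp
      · right; exact ⟨0, by simp [hp]⟩
      · right
        refine ⟨-1, ?_⟩
        simp only [Set.mem_singleton_iff] at hp
        rw [hp, hνeq, zpow_neg_one]
    | one => left; exact ⟨0, by simp⟩
    | mul a b ha hb iha ihb =>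
      rcases iha with ⟨j, rfl⟩ | ⟨j, rfl⟩ <;> rcases ihb with ⟨k, rfl⟩ | ⟨k, rfl⟩
      · left; exact ⟨j + k, (zpow_add σ j k).symm⟩
      · right; exact ⟨j + k, by rw [zpow_add, mul_assoc]⟩
      · right
        refine ⟨j - k, ?_⟩
        rw [mul_assoc, hconj k, ← mul_assoc, ← zpow_add, sub_eq_add_neg]
      · left
        refine ⟨j - k, ?_⟩
        calc σ ^ j * μ * (σ ^ k * μ) = σ ^ j * (μ * σ ^ k) * μ := by group
        _ = σ ^ j * (σ ^ (-k) * μ) * μ := by rw [hconj k]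
        _ = σ ^ j * σ ^ (-k) * (μ * μ) := by group
        _ = σ ^ (j - k) := by rw [hμ2, mul_one, ← zpow_add, sub_eq_add_neg]
    | inv a ha iha =>
      rcases iha with ⟨j, rfl⟩ | ⟨j, rfl⟩
      · left; exact ⟨-j, by rw [zpow_neg]⟩
      · right
        refine ⟨j, ?_⟩
        rw [mul_inv_rev, hμi, ← zpow_neg, ← hrel j]
  -- the action of G is free
  have hfree : ∀ g ∈ G, ∀ x : X, g x = x → g = 1 := by
    intro g hg x hx
    rcases hdec g hg with ⟨k, rfl⟩ | ⟨k, rfl⟩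
    · -- a "rotation" fixing a point is the identity
      have hx' : (σ ^ (-k)) x = x := by
        have h5 := congrArg (σ ^ (-k) : Equiv.Perm X) hx
        rw [← Equiv.Perm.mul_apply, ← zpow_add, neg_add_cancel, zpow_zero,
          Equiv.Perm.one_apply] at h5
        exact h5.symm
      ext y
      obtain ⟨h, hh, hhx⟩ := htrans x y
      rcases hdec h hh with ⟨j, rfl⟩ | ⟨j, rfl⟩
      · rw [← hhx, ← Equiv.Perm.mul_apply, ← zpow_add, add_comm, zpow_add,
          Equiv.Perm.mul_apply, hx, Equiv.Perm.one_apply]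
      · have hperm : σ ^ k * (σ ^ j * μ) = σ ^ j * μ * σ ^ (-k) := by
          rw [mul_assoc, ← hrel k, ← mul_assoc, ← mul_assoc, ← zpow_add,
            ← zpow_add, add_comm k j]
        rw [← hhx, ← Equiv.Perm.mul_apply, hperm, Equiv.Perm.mul_apply, hx',
          Equiv.Perm.one_apply]
    · -- a "reflection" cannot fix a point
      exfalso
      have hμx : μ x = (σ ^ (-k)) x := by
        have h1 : (σ ^ k) (μ x) = x := by
          rw [Equiv.Perm.mul_apply] at hx; exact hx
        have := congrArg (σ ^ (-k) : Equiv.Perm X) h1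
        rwa [← Equiv.Perm.mul_apply, ← zpow_add, neg_add_cancel, zpow_zero,
          Equiv.Perm.one_apply] at this
      rcases Int.even_or_odd k with ⟨m, hm⟩ | ⟨m, hm⟩
      · apply hμf ((σ ^ (-m)) x)
        rw [← Equiv.Perm.mul_apply, hconj (-m), neg_neg, Equiv.Perm.mul_apply,
          hμx, ← Equiv.Perm.mul_apply, ← zpow_add]
        have he : m + -k = -m := by omega
        rw [he]
      · apply hνf ((σ ^ (-(m+1))) x)
        have hνperm : ν * σ ^ (-(m+1)) = σ ^ m * μ := by
          rw [hνeq, mul_assoc, hconj (-(m+1)), neg_neg, ← mul_assoc,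
            ← zpow_neg_one, ← zpow_add]
          have he : (-1 : ℤ) + (m + 1) = m := by ring
          rw [he]
        rw [← Equiv.Perm.mul_apply, hνperm, Equiv.Perm.mul_apply, hμx,
          ← Equiv.Perm.mul_apply, ← zpow_add]
        have he : m + -k = -(m + 1) := by omega
        rw [he]
  -- membership in G
  have hμG : μ ∈ G := Subgroup.subset_closure (by left; rfl)
  have hνG : ν ∈ G := Subgroup.subset_closure (by right; rfl)
  -- elements of the centralizer commute with everything in G
  have hcomm : ∀ c ∈ Subgroup.centralizer ({μ, ν} : Set (Equiv.Perm X)),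
      ∀ g ∈ G, Commute c g := by
    intro c hc g hg
    induction hg using Subgroup.closure_induction with
    | mem p hp => exact (Subgroup.mem_centralizer_iff.mp hc p hp).symm
    | one => exact Commute.one_right c
    | mul a b ha hb iha ihb => exact iha.mul_right ihb
    | inv a ha iha => exact iha.inv_right
  -- the evaluation map from the centralizer to X
  set F : (Subgroup.centralizer ({μ, ν} : Set (Equiv.Perm X))) → X :=
    fun c => c.1 x₀ with hF
  have Finj : Function.Injective F := by
    intro c c' hcc
    ext y
    obtain ⟨g, hg, rfl⟩ := htrans x₀ y
    have h1 := hcomm c.1 c.2 g hg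
    have h2 := hcomm c'.1 c'.2 g hg
    calc c.1 (g x₀) = (c.1 * g) x₀ := rfl
    _ = (g * c.1) x₀ := by rw [h1]
    _ = g (c.1 x₀) := rfl
    _ = g (c'.1 x₀) := by
      have hcc' : c.1 x₀ = c'.1 x₀ := hcc
      rw [hcc']
    _ = (g * c'.1) x₀ := rfl
    _ = (c'.1 * g) x₀ := by rw [h2]
    _ = c'.1 (g x₀) := rfl
  have Fsurj : Function.Surjective F := by
    intro y
    obtain ⟨g, hgG, hgx⟩ := htrans x₀ y
    have hch := fun z => htrans x₀ z
    choose H hH1 hH2 using hch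
    set f : X → X := fun z => (H z) (g x₀) with hf
    have finj : Function.Injective f := by
      intro a b hab
      have h1 : ((H b)⁻¹ * H a) (g x₀) = g x₀ := by
        simp only [Equiv.Perm.mul_apply]
        have hab' : (H a) (g x₀) = (H b) (g x₀) := hab
        rw [hab']
        exact Equiv.symm_apply_apply _ _
      have h2 : (H b)⁻¹ * H a = 1 :=
        hfree _ (mul_mem (inv_mem (hH1 b)) (hH1 a)) _ h1
      have h3 : H a = H b := by
        rw [inv_mul_eq_one] at h2
        exact h2.symm
      rw [← hH2 a, ← hH2 b, h3]
    set c : Equiv.Perm X := Equiv.ofBijective f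
      ((Finite.injective_iff_bijective).mp finj) with hc
    have hcz : ∀ z, c z = (H z) (g x₀) := fun z => rfl
    have hkey : ∀ p ∈ G, ∀ z : X, H (p z) = p * H z := by
      intro p hp z
      have h1 : ((H (p z))⁻¹ * (p * H z)) x₀ = x₀ := by
        simp only [Equiv.Perm.mul_apply, hH2]
        rw [Equiv.Perm.inv_def, Equiv.symm_apply_eq]
        exact (hH2 (p z)).symm
      have h2 : (H (p z))⁻¹ * (p * H z) = 1 :=
        hfree _ (mul_mem (inv_mem (hH1 _)) (mul_mem hp (hH1 z))) _ h1
      rw [inv_mul_eq_one] at h2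
      exact h2
    have hcC : c ∈ Subgroup.centralizer ({μ, ν} : Set (Equiv.Perm X)) := by
      rw [Subgroup.mem_centralizer_iff]
      intro p hp
      have hpG : p ∈ G := by
        rcases hp with hp | hp
        · rw [hp]; exact hμG
        · simp only [Set.mem_singleton_iff] at hp; rw [hp]; exact hνG
      ext z
      simp only [Equiv.Perm.mul_apply]
      rw [hcz, hcz, hkey p hpG z, Equiv.Perm.mul_apply]
    refine ⟨⟨c, hcC⟩, ?_⟩
    have hH0 : H x₀ = 1 := hfree _ (hH1 x₀) x₀ (hH2 x₀)
    show c x₀ = y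
    rw [hcz, hH0, Equiv.Perm.one_apply, hgx]
  exact Nat.card_eq_of_bijective F ⟨Finj, Fsurj⟩
end

section
/- Let d ≥ 1, let μ, ν be permutations of Ī_d, and let τ be a permutation of Ī_d that is odd (τ(−κ) = −τ(κ) for all κ) and commutes with both μ and ν. If M ∈ (ℝ_{>0})^{{1,…,d}} is a moduli list compatible with (μ,ν), then the relabelled list M' defined by M'_λ = M_{|τ(λ)|} for λ ∈ {1,…,d} is also compatible with (μ,ν). -/
/-- A moduli list `M` (indexed by {1,…,d} via `Fin d`) is compatible with the origami
`(μ,ν)` if for every orbit C of ⟨ι∘σ⟩ on X = Ī_d × {h,v}, the product of `M |κ|` over the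
vertical elements (κ,v) of C equals the product over the horizontal elements (κ,h) of C. -/
def Compatible (d : ℕ) (μ ν : Equiv.Perm (IBar d)) (M : Fin d → ℝ) : Prop :=
  ∀ ζ : XBar d,
    (∏ᶠ κ ∈ {κ : IBar d | ∃ n : ℤ, ((iotaP d * sigmaP μ ν) ^ n) ζ = (κ, false)}, M (idx κ)) =
    ∏ᶠ κ ∈ {κ : IBar d | ∃ n : ℤ, ((iotaP d * sigmaP μ ν) ^ n) ζ = (κ, true)}, M (idx κ)

/-- The element `λ ∈ {1,…,d} ⊆ Ī_d` corresponding to `lam : Fin d`. -/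
def toIBar {d : ℕ} (lam : Fin d) : IBar d :=
  ⟨((lam : ℕ) : ℤ) + 1, by
    have h : (lam : ℕ) < d := lam.isLt
    refine ⟨by omega, ?_⟩
    rw [abs_of_pos (by omega)]
    omega⟩

lemma idx_negI {d : ℕ} (κ : IBar d) : idx (negI κ) = idx κ := by
  simp [idx, negI]

lemma toIBar_idx {d : ℕ} (κ : IBar d) : toIBar (idx κ) = κ ∨ toIBar (idx κ) = negI κ := by
  have h1 : κ.1 ≠ 0 := κ.2.1
  have habs : 1 ≤ κ.1.natAbs := by omega
  have hval : (toIBar (idx κ)).1 = (κ.1.natAbs : ℤ) := by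
    show (((κ.1.natAbs - 1 : ℕ) : ℤ) + 1) = _
    omega
  rcases Int.natAbs_eq κ.1 with h | h
  · left; apply Subtype.ext; rw [hval]; exact h.symm
  · right; apply Subtype.ext; rw [hval]; show _ = -κ.1; omega

lemma idx_tau_toIBar {d : ℕ} (τ : Equiv.Perm (IBar d))
    (hodd : ∀ κ : IBar d, τ (negI κ) = negI (τ κ)) (κ : IBar d) :
    idx (τ (toIBar (idx κ))) = idx (τ κ) := by
  rcases toIBar_idx κ with h | h
  · rw [h]
  · rw [h, hodd, idx_negI]

/-- τ acting diagonally on both copies. -/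
def tauX {d : ℕ} (τ : Equiv.Perm (IBar d)) : Equiv.Perm (XBar d) :=
  Equiv.prodCongr τ (Equiv.refl Bool)

lemma tauX_comm {d : ℕ} (μ ν τ : Equiv.Perm (IBar d))
    (hodd : ∀ κ : IBar d, τ (negI κ) = negI (τ κ))
    (hτμ : τ * μ = μ * τ) (hτν : τ * ν = ν * τ) :
    Commute (tauX τ) (iotaP d * sigmaP μ ν) := by
  have hμ : ∀ κ, τ (μ κ) = μ (τ κ) := fun κ => by
    simpa [Equiv.Perm.mul_apply] using Equiv.ext_iff.mp hτμ κ
  have hν : ∀ κ, τ (ν κ) = ν (τ κ) := fun κ => by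
    simpa [Equiv.Perm.mul_apply] using Equiv.ext_iff.mp hτν κ
  ext ⟨κ, b⟩ <;> cases b <;>
    simp [tauX, iotaP, sigmaP, Equiv.Perm.mul_apply, hμ, hν, hodd]

/-- if τ is an odd permutation of Ī_d commuting with μ and ν, and M is a
moduli list compatible with (μ,ν), then the relabelled list λ ↦ M_{|τ(λ)|} is also
compatible with (μ,ν). -/
theorem stmt8 (d : ℕ) (hd : 1 ≤ d) (μ ν τ : Equiv.Perm (IBar d))
    (hodd : ∀ κ : IBar d, τ (negI κ) = negI (τ κ))
    (hτμ : τ * μ = μ * τ) (hτν : τ * ν = ν * τ)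
    (M : Fin d → ℝ) (hpos : ∀ lam, 0 < M lam)
    (hcomp : Compatible d μ ν M) :
    Compatible d μ ν (fun lam => M (idx (τ (toIBar lam)))) := by
  intro ζ
  set ρ := iotaP d * sigmaP μ ν with hρ
  have hc : Commute (tauX τ) ρ := tauX_comm μ ν τ hodd hτμ hτν
  have hcn : ∀ n : ℤ, ∀ x : XBar d, (ρ ^ n) (tauX τ x) = tauX τ ((ρ ^ n) x) := by
    intro n x
    have := (hc.zpow_right n).symm
    calc (ρ ^ n) (tauX τ x) = ((ρ ^ n) * tauX τ) x := rfl
      _ = (tauX τ * (ρ ^ n)) x := by rw [this]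
      _ = tauX τ ((ρ ^ n) x) := rfl
  have himg : ∀ b : Bool,
      τ '' {κ : IBar d | ∃ n : ℤ, (ρ ^ n) ζ = (κ, b)} =
      {κ : IBar d | ∃ n : ℤ, (ρ ^ n) (tauX τ ζ) = (κ, b)} := by
    intro b
    ext x
    constructor
    · rintro ⟨κ, ⟨n, hn⟩, rfl⟩
      exact ⟨n, by rw [hcn, hn]; rfl⟩
    · rintro ⟨n, hn⟩
      refine ⟨τ.symm x, ⟨n, ?_⟩, τ.apply_symm_apply x⟩
      rw [hcn] at hn
      have : (ρ ^ n) ζ = (tauX τ).symm (x, b) := by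
        rw [← hn, Equiv.symm_apply_apply]
      rw [this]; rfl
  have hre : ∀ b : Bool,
      (∏ᶠ κ ∈ {κ : IBar d | ∃ n : ℤ, (ρ ^ n) ζ = (κ, b)},
        M (idx (τ (toIBar (idx κ))))) =
      ∏ᶠ κ ∈ {κ : IBar d | ∃ n : ℤ, (ρ ^ n) (tauX τ ζ) = (κ, b)}, M (idx κ) := by
    intro b
    rw [← himg b, finprod_mem_image (τ.injective.injOn)]
    exact finprod_mem_congr rfl (fun κ _ => by rw [idx_tau_toIBar τ hodd])
  rw [hre false, hre true]
  exact hcomp (tauX τ ζ)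
end
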